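/- arXiv:2205.03760 — 7 statements merged into one kernel-verified Lean document; each statement's English description precedes it below -/
import Mathlib

section
/- For every c ∈ E, the unique u ∈ H satisfying S*(S(u)) + γ·u = S*(c) is given explicitly by u = S*((γ·1 + M)⁻¹ · c), where (γ·1 + M)⁻¹ · c ∈ ℝ^n is regarded as an element of E. -/
open Matrix
open scoped RealInnerProductSpace

section Aux
variable {H : Type*} [NormedAddCommGroup H] [InnerProductSpace ℝ H] [CompleteSpace H]
  {n : ℕ} (S : H →L[ℝ] EuclideanSpace ℝ (Fin n)) (M : Matrix (Fin n) (Fin n) ℝ)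
  (hM : ∀ i j, M i j =
      ⟪S.adjoint (EuclideanSpace.single i (1 : ℝ)),
        S.adjoint (EuclideanSpace.single j (1 : ℝ))⟫)

lemma aux_decomp (v : EuclideanSpace ℝ (Fin n)) :
    v = ∑ j, v j • EuclideanSpace.single j (1 : ℝ) := by
  ext i
  rw [WithLp.ofLp_sum, Finset.sum_apply]
  simp [EuclideanSpace.single_apply]

include hM in
lemma aux_key (w : Fin n → ℝ) :
    S (S.adjoint ((EuclideanSpace.equiv (Fin n) ℝ).symm w)) =
      (EuclideanSpace.equiv (Fin n) ℝ).symm (M *ᵥ w) := by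
  ext i
  set v : EuclideanSpace ℝ (Fin n) := (EuclideanSpace.equiv (Fin n) ℝ).symm w with hvw
  have h1 : (S (S.adjoint v)) i = ⟪EuclideanSpace.single i (1:ℝ), S (S.adjoint v)⟫ := by
    rw [EuclideanSpace.inner_single_left]; simp
  rw [show ((EuclideanSpace.equiv (Fin n) ℝ).symm (M *ᵥ w)) i = (M *ᵥ w) i from rfl, h1,
    ← ContinuousLinearMap.adjoint_inner_left]
  conv_lhs => rw [aux_decomp v]
  rw [map_sum, inner_sum]
  simp_rw [_root_.map_smul, real_inner_smul_right, ← hM]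
  have hvi : ∀ j, v j = w j := fun j => rfl
  simp_rw [hvi]
  simp [Matrix.mulVec, dotProduct, mul_comm]

end Aux

set_option maxHeartbeats 1000000 in
/-- With `E = EuclideanSpace ℝ (Fin n)` and `M` the matrix of
`S ∘ S*` in the standard basis, for every `c ∈ E` the unique `u` solving
`S*(S(u)) + γ·u = S*(c)` is `u = S*((γ·1 + M)⁻¹ · c)`. -/
theorem stmt_3 {H : Type*}
    [NormedAddCommGroup H] [InnerProductSpace ℝ H] [CompleteSpace H]
    {n : ℕ}
    (S : H →L[ℝ] EuclideanSpace ℝ (Fin n)) (γ : ℝ) (hγ : 0 < γ)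
    (M : Matrix (Fin n) (Fin n) ℝ)
    (hM : ∀ i j, M i j =
      ⟪S.adjoint (EuclideanSpace.single i (1 : ℝ)),
        S.adjoint (EuclideanSpace.single j (1 : ℝ))⟫)
    (c : EuclideanSpace ℝ (Fin n)) (u : H)
    (hu : S.adjoint (S u) + γ • u = S.adjoint c) :
    u = S.adjoint ((EuclideanSpace.equiv (Fin n) ℝ).symm
      ((γ • (1 : Matrix (Fin n) (Fin n) ℝ) + M)⁻¹ *ᵥ
        (EuclideanSpace.equiv (Fin n) ℝ c))) := by
  set A := γ • (1 : Matrix (Fin n) (Fin n) ℝ) + M with hA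
  have hpsd : ∀ x : Fin n → ℝ,
      ⟪(EuclideanSpace.equiv (Fin n) ℝ).symm x,
        (EuclideanSpace.equiv (Fin n) ℝ).symm (M *ᵥ x)⟫ =
        ‖S.adjoint ((EuclideanSpace.equiv (Fin n) ℝ).symm x)‖ ^ 2 := by
    intro x
    rw [← aux_key S M hM, ← real_inner_self_eq_norm_sq,
      ContinuousLinearMap.adjoint_inner_left]
  have hAact : ∀ x : Fin n → ℝ, A *ᵥ x = γ • x + M *ᵥ x := by
    intro x
    rw [hA, Matrix.add_mulVec, Matrix.smul_mulVec, Matrix.one_mulVec]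
  have hker : ∀ x : Fin n → ℝ, A *ᵥ x = 0 → x = 0 := by
    intro x hx
    set x' : EuclideanSpace ℝ (Fin n) := (EuclideanSpace.equiv (Fin n) ℝ).symm x with hx'
    have h0 : ⟪x', (EuclideanSpace.equiv (Fin n) ℝ).symm (A *ᵥ x)⟫ = 0 := by
      rw [hx]; simp
    rw [hAact, map_add] at h0
    have h1 : (EuclideanSpace.equiv (Fin n) ℝ).symm (γ • x) = γ • x' := by
      rw [hx']; exact _root_.map_smul _ _ _
    rw [inner_add_right, h1, real_inner_smul_right, real_inner_self_eq_norm_sq,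
      hpsd x] at h0
    have hx0 : ‖x'‖ ^ 2 = 0 := by
      nlinarith [sq_nonneg ‖S.adjoint ((EuclideanSpace.equiv (Fin n) ℝ).symm x)‖,
        sq_nonneg ‖x'‖]
    have : x' = 0 := norm_eq_zero.mp (sq_eq_zero_iff.mp hx0)
    rw [hx'] at this
    simpa using congrArg (EuclideanSpace.equiv (Fin n) ℝ) this
  have hAunit : IsUnit A := by
    rw [← Matrix.mulVec_injective_iff_isUnit]
    intro x y hxy
    exact sub_eq_zero.mp (hker (x - y) (by rw [Matrix.mulVec_sub, hxy, sub_self]))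
  set c' : Fin n → ℝ := (EuclideanSpace.equiv (Fin n) ℝ) c with hc'
  set v : Fin n → ℝ := A⁻¹ *ᵥ c' with hv
  set u' : H := S.adjoint ((EuclideanSpace.equiv (Fin n) ℝ).symm v) with hu'def
  have hAv : A *ᵥ v = c' := by
    rw [hv, Matrix.mulVec_mulVec, Matrix.mul_nonsing_inv _
      ((Matrix.isUnit_iff_isUnit_det A).mp hAunit), Matrix.one_mulVec]
  have hu2 : S.adjoint (S u') + γ • u' = S.adjoint c := by
    rw [hu'def, aux_key S M hM]
    have hs : γ • S.adjoint ((EuclideanSpace.equiv (Fin n) ℝ).symm v)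
        = S.adjoint ((EuclideanSpace.equiv (Fin n) ℝ).symm (γ • v)) := by
      rw [_root_.map_smul, _root_.map_smul]
    rw [hs, ← map_add, ← map_add]
    have h2 : (M *ᵥ v) + γ • v = A *ᵥ v := by rw [hAact, add_comm]
    rw [h2, hAv, hc']
    simp
  clear_value u' v c' A
  have hd : S.adjoint (S (u - u')) + γ • (u - u') = 0 := by
    rw [map_sub, map_sub, smul_sub]
    rw [show S.adjoint (S u) - S.adjoint (S u') + (γ • u - γ • u')
      = (S.adjoint (S u) + γ • u) - (S.adjoint (S u') + γ • u') by abel, hu, hu2,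
      sub_self]
  have h0 : ⟪u - u', S.adjoint (S (u - u')) + γ • (u - u')⟫ = 0 := by rw [hd]; simp
  rw [inner_add_right, real_inner_smul_right, real_inner_self_eq_norm_sq,
    ContinuousLinearMap.adjoint_inner_right, real_inner_self_eq_norm_sq] at h0
  have hnn : ‖u - u'‖ ^ 2 = 0 := by
    nlinarith [sq_nonneg ‖S (u - u')‖, sq_nonneg ‖u - u'‖]
  rw [← sub_eq_zero, ← norm_eq_zero]
  exact sq_eq_zero_iff.mp hnn
end

section
/- Let C ⊆ E be nonempty and closed. Then there exists z† ∈ C minimizing z ↦ ⟨z, (γ·1 + M)⁻¹ · z⟩ over C; and for any such minimizer z†, the pair (u†, z†), where u† ∈ H is the unique solution of S*(S(u†)) + γ·u† = S*(z†), satisfies ‖S(u†) − z†‖² + γ‖u†‖² ≤ ‖S(u) − z‖² + γ‖u‖² for all u ∈ H and all z ∈ C. -/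
open Matrix
open scoped RealInnerProductSpace

set_option maxHeartbeats 1000000 in
/-- For nonempty closed `C ⊆ E`, there exists `z† ∈ C`
minimizing `z ↦ ⟨z, (γ·1 + M)⁻¹·z⟩` over `C`; and for any such minimizer `z†`,
the pair `(u†, z†)` with `S*(S(u†)) + γ·u† = S*(z†)` minimizes
`‖S(u) − z‖² + γ‖u‖²` over all `u ∈ H`, `z ∈ C`. -/
theorem stmt_7 {H : Type*}
    [NormedAddCommGroup H] [InnerProductSpace ℝ H] [CompleteSpace H]
    {n : ℕ}
    (S : H →L[ℝ] EuclideanSpace ℝ (Fin n)) (γ : ℝ) (hγ : 0 < γ)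
    (M : Matrix (Fin n) (Fin n) ℝ)
    (hM : ∀ i j, M i j =
      ⟪S.adjoint (EuclideanSpace.single i (1 : ℝ)),
        S.adjoint (EuclideanSpace.single j (1 : ℝ))⟫)
    (C : Set (EuclideanSpace ℝ (Fin n))) (hCne : C.Nonempty)
    (hCcl : IsClosed C) :
    (∃ zd ∈ C, ∀ z ∈ C,
      ⟪zd, (EuclideanSpace.equiv (Fin n) ℝ).symm
          ((γ • (1 : Matrix (Fin n) (Fin n) ℝ) + M)⁻¹ *ᵥ
            (EuclideanSpace.equiv (Fin n) ℝ zd))⟫ ≤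
        ⟪z, (EuclideanSpace.equiv (Fin n) ℝ).symm
          ((γ • (1 : Matrix (Fin n) (Fin n) ℝ) + M)⁻¹ *ᵥ
            (EuclideanSpace.equiv (Fin n) ℝ z))⟫) ∧
    (∀ zd ∈ C,
      (∀ z ∈ C,
        ⟪zd, (EuclideanSpace.equiv (Fin n) ℝ).symm
            ((γ • (1 : Matrix (Fin n) (Fin n) ℝ) + M)⁻¹ *ᵥ
              (EuclideanSpace.equiv (Fin n) ℝ zd))⟫ ≤
          ⟪z, (EuclideanSpace.equiv (Fin n) ℝ).symm
            ((γ • (1 : Matrix (Fin n) (Fin n) ℝ) + M)⁻¹ *ᵥ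
              (EuclideanSpace.equiv (Fin n) ℝ z))⟫) →
      ∀ ud : H, S.adjoint (S ud) + γ • ud = S.adjoint zd →
        ∀ u : H, ∀ z ∈ C,
          ‖S ud - zd‖ ^ 2 + γ * ‖ud‖ ^ 2 ≤ ‖S u - z‖ ^ 2 + γ * ‖u‖ ^ 2) := by
  classical
  set e : EuclideanSpace ℝ (Fin n) ≃L[ℝ] (Fin n → ℝ) := EuclideanSpace.equiv (Fin n) ℝ with he
  set A : Matrix (Fin n) (Fin n) ℝ := γ • (1 : Matrix (Fin n) (Fin n) ℝ) + M with hA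
  -- matrix action of M
  have hMv : ∀ (v : EuclideanSpace ℝ (Fin n)) (i : Fin n),
      (M *ᵥ e v) i = S (S.adjoint v) i := by
    intro v i
    have h3 : ∀ j : Fin n, M i j = S (S.adjoint (EuclideanSpace.single j (1 : ℝ))) i := by
      intro j
      rw [hM i j, ContinuousLinearMap.adjoint_inner_left, EuclideanSpace.inner_single_left]
      simp
    have hv : v = ∑ j, v j • EuclideanSpace.single j (1 : ℝ) := by
      ext k; rw [WithLp.ofLp_sum, Finset.sum_apply]; simp [EuclideanSpace.single_apply]
    calc (M *ᵥ e v) i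
        = ∑ j, M i j * v j := by
          simp [Matrix.mulVec, dotProduct, he]
      _ = S (S.adjoint v) i := by
          conv_rhs => rw [hv]
          rw [map_sum, map_sum, WithLp.ofLp_sum, Finset.sum_apply]
          refine Finset.sum_congr rfl fun j _ => ?_
          rw [h3 j, _root_.map_smul, _root_.map_smul]
          simp [PiLp.smul_apply, mul_comm]
  -- matrix action of A
  have hAv : ∀ (v : EuclideanSpace ℝ (Fin n)) (i : Fin n),
      (A *ᵥ e v) i = (γ • v + S (S.adjoint v)) i := by
    intro v i
    rw [hA, Matrix.add_mulVec, Matrix.smul_mulVec, Matrix.one_mulVec, Pi.add_apply,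
      hMv v i]
    simp [he, PiLp.add_apply, PiLp.smul_apply]
  -- quadratic form positivity
  have hpos : ∀ v : EuclideanSpace ℝ (Fin n),
      ⟪γ • v + S (S.adjoint v), v⟫ = γ * ‖v‖ ^ 2 + ‖S.adjoint v‖ ^ 2 := by
    intro v
    rw [inner_add_left, real_inner_smul_left, real_inner_self_eq_norm_sq]
    have : ⟪S (S.adjoint v), v⟫ = ⟪S.adjoint v, S.adjoint v⟫ := by
      rw [real_inner_comm, ← ContinuousLinearMap.adjoint_inner_left]
    rw [this, real_inner_self_eq_norm_sq]
  -- A is invertible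
  have hU : IsUnit A := by
    rw [← Matrix.mulVec_injective_iff_isUnit]
    have key : ∀ x : Fin n → ℝ, A *ᵥ x = 0 → x = 0 := by
      intro x hx
      set v : EuclideanSpace ℝ (Fin n) := e.symm x with hv
      have hev : e v = x := e.apply_symm_apply x
      have h0 : γ • v + S (S.adjoint v) = 0 := by
        ext i
        have h := hAv v i
        rw [hev, hx] at h
        simpa using h.symm
      have h1 : (0 : ℝ) = γ * ‖v‖ ^ 2 + ‖S.adjoint v‖ ^ 2 := by
        rw [← hpos v, h0, inner_zero_left]
      have hga : γ * ‖v‖ ^ 2 = 0 := by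
        nlinarith [sq_nonneg ‖S.adjoint v‖, mul_nonneg hγ.le (sq_nonneg ‖v‖)]
      have h3 : v = 0 := by
        have := (mul_eq_zero.mp hga).resolve_left hγ.ne'
        simpa [pow_eq_zero_iff] using this
      rw [← hev, h3]
      simp
    intro x y hxy
    have := key (x - y) (by rw [Matrix.mulVec_sub, hxy, sub_self])
    exact sub_eq_zero.mp this
  have hUdet : IsUnit A.det := (Matrix.isUnit_iff_isUnit_det _).mp hU
  have hAinv : ∀ x : Fin n → ℝ, A *ᵥ (A⁻¹ *ᵥ x) = x := by
    intro x
    rw [Matrix.mulVec_mulVec, Matrix.mul_nonsing_inv _ hUdet, Matrix.one_mulVec]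
  -- the map w and the quadratic functional F
  set w : EuclideanSpace ℝ (Fin n) → EuclideanSpace ℝ (Fin n) :=
    fun z => e.symm (A⁻¹ *ᵥ e z) with hw
  have hwz : ∀ z : EuclideanSpace ℝ (Fin n), γ • w z + S (S.adjoint (w z)) = z := by
    intro z
    ext i
    have h1 := hAv (w z) i
    have h2 : e (w z) = A⁻¹ *ᵥ e z := e.apply_symm_apply _
    rw [h2, hAinv] at h1
    rw [← h1]
    simp [he]
  set F : EuclideanSpace ℝ (Fin n) → ℝ := fun z => ⟪z, w z⟫ with hF
  have hFval : ∀ z, F z = γ * ‖w z‖ ^ 2 + ‖S.adjoint (w z)‖ ^ 2 := by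
    intro z
    have h : F z = ⟪γ • w z + S (S.adjoint (w z)), w z⟫ := by rw [hwz z]
    rw [h, hpos]
  have hFnonneg : ∀ z, 0 ≤ F z := by
    intro z
    rw [hFval z]
    positivity
  -- lower bound : γ * F z ≤ objective
  have hlow : ∀ (u : H) (z : EuclideanSpace ℝ (Fin n)),
      γ * F z ≤ ‖S u - z‖ ^ 2 + γ * ‖u‖ ^ 2 := by
    intro u z
    set v := w z with hv
    set u' := u - S.adjoint v with hu'
    have hz := hwz z
    have hSu : S u - z = S u' - γ • v := by
      rw [hu', ← hz]
      simp only [map_sub]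
      abel
    have hcross : ⟪S u', v⟫ = ⟪u', S.adjoint v⟫ := by
      rw [ContinuousLinearMap.adjoint_inner_right]
    have hn1 : ‖S u - z‖ ^ 2 = ‖S u'‖ ^ 2 - 2 * (γ * ⟪u', S.adjoint v⟫) + γ ^ 2 * ‖v‖ ^ 2 := by
      rw [hSu, norm_sub_sq_real, real_inner_smul_right, hcross, norm_smul, mul_pow,
        Real.norm_eq_abs, sq_abs]
    have hn2 : ‖u‖ ^ 2 = ‖u'‖ ^ 2 + 2 * ⟪u', S.adjoint v⟫ + ‖S.adjoint v‖ ^ 2 := by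
      have hu : u = u' + S.adjoint v := by rw [hu']; abel
      rw [hu, norm_add_sq_real]
    rw [hn1, hn2, hFval z, ← hv]
    nlinarith [sq_nonneg ‖S u'‖, sq_nonneg ‖u'‖, hγ.le]
  -- continuity of F
  have hwcont : Continuous w := by
    have h1 : Continuous fun y : Fin n → ℝ => A⁻¹ *ᵥ y := by
      have : Continuous (A⁻¹.mulVecLin : (Fin n → ℝ) →ₗ[ℝ] (Fin n → ℝ)) :=
        LinearMap.continuous_of_finiteDimensional _
      exact this
    exact e.symm.continuous.comp (h1.comp e.continuous)
  have hFcont : Continuous F := continuous_id.inner hwcont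
  -- coercivity
  set K : ℝ := γ + ‖S‖ * ‖S.adjoint‖ with hK
  have hKpos : 0 < K := by
    have := mul_nonneg (norm_nonneg S) (norm_nonneg (S.adjoint))
    rw [hK]; linarith
  set c : ℝ := γ / K ^ 2 with hc
  have hcpos : 0 < c := div_pos hγ (by positivity)
  have hcoer : ∀ z, c * ‖z‖ ^ 2 ≤ F z := by
    intro z
    have hzle : ‖z‖ ≤ K * ‖w z‖ := by
      calc ‖z‖ = ‖γ • w z + S (S.adjoint (w z))‖ := by rw [hwz z]
        _ ≤ ‖γ • w z‖ + ‖S (S.adjoint (w z))‖ := norm_add_le _ _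
        _ ≤ γ * ‖w z‖ + ‖S‖ * (‖S.adjoint‖ * ‖w z‖) := by
            gcongr
            · rw [norm_smul, Real.norm_eq_abs, abs_of_pos hγ]
            · exact (S.le_opNorm _).trans (by gcongr; exact S.adjoint.le_opNorm _)
        _ = K * ‖w z‖ := by rw [hK]; ring
    have h1 : ‖z‖ ^ 2 ≤ K ^ 2 * ‖w z‖ ^ 2 := by nlinarith [norm_nonneg z, norm_nonneg (w z)]
    have h2 : γ * ‖w z‖ ^ 2 ≤ F z := by
      rw [hFval z]
      nlinarith [sq_nonneg ‖S.adjoint (w z)‖]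
    rw [hc, div_mul_eq_mul_div, div_le_iff₀ (by positivity : (0:ℝ) < K ^ 2)]
    calc γ * ‖z‖ ^ 2 ≤ γ * (K ^ 2 * ‖w z‖ ^ 2) := by nlinarith
      _ = γ * ‖w z‖ ^ 2 * K ^ 2 := by ring
      _ ≤ F z * K ^ 2 := by nlinarith [sq_nonneg K]
  -- existence of minimizer on C
  obtain ⟨z0, hz0⟩ := hCne
  set R : ℝ := max ‖z0‖ (Real.sqrt (F z0 / c)) with hR
  have hcR : F z0 ≤ c * R ^ 2 := by
    have h1 : Real.sqrt (F z0 / c) ≤ R := le_max_right _ _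
    have h2 : F z0 / c ≤ R ^ 2 := by
      have hs := Real.sq_sqrt (div_nonneg (hFnonneg z0) hcpos.le)
      nlinarith [Real.sqrt_nonneg (F z0 / c)]
    rw [div_le_iff₀ hcpos] at h2
    linarith
  have hDcp : IsCompact (C ∩ Metric.closedBall 0 R) :=
    (isCompact_closedBall (0 : EuclideanSpace ℝ (Fin n)) R).inter_left hCcl
  have hDne : (C ∩ Metric.closedBall 0 R).Nonempty := ⟨z0, hz0, by
    simp only [Metric.mem_closedBall, dist_zero_right]
    exact le_max_left _ _⟩
  obtain ⟨zd, hzdD, hzdmin⟩ := hDcp.exists_isMinOn hDne hFcont.continuousOn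
  have hmin : ∀ z ∈ C, F zd ≤ F z := by
    intro z hz
    by_cases hb : ‖z‖ ≤ R
    · exact isMinOn_iff.mp hzdmin z ⟨hz, by
        simp only [Metric.mem_closedBall, dist_zero_right]; exact hb⟩
    · push_neg at hb
      have h1 : F zd ≤ F z0 := isMinOn_iff.mp hzdmin z0 ⟨hz0, by
        simp only [Metric.mem_closedBall, dist_zero_right]; exact le_max_left _ _⟩
      have hRnn : 0 ≤ R := le_trans (norm_nonneg z0) (le_max_left _ _)
      have hsq : R ^ 2 ≤ ‖z‖ ^ 2 := by nlinarith
      have h2 : c * R ^ 2 ≤ c * ‖z‖ ^ 2 := by nlinarith [hcpos.le, hsq]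
      have h3 := hcoer z
      linarith
  refine ⟨⟨zd, hzdD.1, fun z hz => hmin z hz⟩, ?_⟩
  -- optimality of (ud, zd')
  intro zd' hzd' hmin' ud hud u z hz
  set v' := w zd' with hv'
  have hz' : zd' = γ • v' + S (S.adjoint v') := (hwz zd').symm
  have hQinj : ∀ a b : H, S.adjoint (S a) + γ • a = S.adjoint (S b) + γ • b → a = b := by
    intro a b hab
    have h0 : S.adjoint (S (a - b)) + γ • (a - b) = 0 := by
      have hexp : S.adjoint (S (a - b)) + γ • (a - b)
          = (S.adjoint (S a) + γ • a) - (S.adjoint (S b) + γ • b) := by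
        simp only [map_sub, smul_sub]
        abel
      rw [hexp, hab, sub_self]
    have h1 : (0 : ℝ) = ‖S (a - b)‖ ^ 2 + γ * ‖a - b‖ ^ 2 := by
      have h := congrArg (fun x => ⟪x, a - b⟫) h0
      simp only [inner_zero_left] at h
      rw [inner_add_left, real_inner_smul_left, real_inner_self_eq_norm_sq,
        ContinuousLinearMap.adjoint_inner_left, real_inner_self_eq_norm_sq] at h
      linarith [h.symm.le, h.symm.ge]
    have hga : γ * ‖a - b‖ ^ 2 = 0 := by
      nlinarith [sq_nonneg ‖S (a - b)‖, mul_nonneg hγ.le (sq_nonneg ‖a - b‖)]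
    have h2 : a - b = 0 := by
      have := (mul_eq_zero.mp hga).resolve_left hγ.ne'
      simpa [pow_eq_zero_iff] using this
    exact sub_eq_zero.mp h2
  have hcand : S.adjoint (S (S.adjoint v')) + γ • S.adjoint v' = S.adjoint zd' := by
    rw [hz', map_add, _root_.map_smul]
    abel
  have hud_eq : ud = S.adjoint v' := hQinj _ _ (by rw [hud, ← hcand])
  have hSud : S ud - zd' = -(γ • v') := by
    rw [hud_eq, hz']
    abel
  have hval : ‖S ud - zd'‖ ^ 2 + γ * ‖ud‖ ^ 2 = γ * F zd' := by
    rw [hSud, hud_eq, norm_neg, norm_smul, Real.norm_eq_abs, abs_of_pos hγ, hFval zd', ← hv']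
    ring
  have hstep : F zd' ≤ F z := hmin' z hz
  calc ‖S ud - zd'‖ ^ 2 + γ * ‖ud‖ ^ 2 = γ * F zd' := hval
    _ ≤ γ * F z := by nlinarith
    _ ≤ ‖S u - z‖ ^ 2 + γ * ‖u‖ ^ 2 := hlow u z
end

section
/- For every z ∈ ℝ^n, let u† := Σ_{j=1}^m (Θ⁻¹·Aᵀ·(γ·1 + Q)⁻¹·z)_j · g_j ∈ H and v := Σ_{i=1}^n ((γ·1 + G)⁻¹·z)_i · k_i ∈ H. Then ‖u† − v‖² ≤ 3·‖(γ·1 + Q)⁻¹ − (γ·1 + G)⁻¹‖·‖z‖². -/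
open Matrix
open scoped Matrix.Norms.L2Operator RealInnerProductSpace

private lemma inner_sum_smul {H : Type*} [NormedAddCommGroup H] [InnerProductSpace ℝ H]
    {p q : ℕ} (f : Fin p → H) (h : Fin q → H) (M : Matrix (Fin p) (Fin q) ℝ)
    (hM : ∀ i j, M i j = ⟪f i, h j⟫) (a : Fin p → ℝ) (b : Fin q → ℝ) :
    ⟪∑ i, a i • f i, ∑ j, b j • h j⟫ = a ⬝ᵥ (M *ᵥ b) := by
  simp only [sum_inner, inner_sum, real_inner_smul_left, real_inner_smul_right,
    dotProduct, Matrix.mulVec, hM, Finset.mul_sum]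
  rw [Finset.sum_comm]
  exact Finset.sum_congr rfl fun i _ => Finset.sum_congr rfl fun j _ => by ring

private lemma dot_self_nonneg' {p : ℕ} (x : Fin p → ℝ) : 0 ≤ x ⬝ᵥ x :=
  Finset.sum_nonneg fun i _ => mul_self_nonneg _

private lemma gram_posDef {H : Type*} [NormedAddCommGroup H] [InnerProductSpace ℝ H]
    {p : ℕ} (f : Fin p → H) (hf : LinearIndependent ℝ f) (M : Matrix (Fin p) (Fin p) ℝ)
    (hM : ∀ i j, M i j = ⟪f i, f j⟫) : M.PosDef := by
  rw [Matrix.posDef_iff_dotProduct_mulVec]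
  constructor
  · ext i j
    simp only [Matrix.conjTranspose_apply, hM, star_trivial]
    exact real_inner_comm _ _
  · intro x hx
    have hs : star x = x := by simp
    have key : x ⬝ᵥ (M *ᵥ x) = ⟪∑ i, x i • f i, ∑ j, x j • f j⟫ :=
      (inner_sum_smul f f M hM x x).symm
    rw [hs, key]
    have hne : (∑ i, x i • f i) ≠ 0 := fun hzero =>
      hx (funext fun i => Fintype.linearIndependent_iff.mp hf x hzero i)
    have h0 : ⟪∑ i, x i • f i, ∑ j, x j • f j⟫ ≠ 0 := fun hc =>
      hne (inner_self_eq_zero.mp hc)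
    exact lt_of_le_of_ne real_inner_self_nonneg (Ne.symm h0)

private lemma quad_form {a b c : ℕ} (K : Matrix (Fin a) (Fin b) ℝ)
    (W : Matrix (Fin a) (Fin c) ℝ) (x : Fin b → ℝ) (y : Fin c → ℝ) :
    (K *ᵥ x) ⬝ᵥ (W *ᵥ y) = x ⬝ᵥ ((Kᵀ * W) *ᵥ y) := by
  rw [Matrix.dotProduct_mulVec x (Kᵀ * W) y, ← Matrix.vecMul_vecMul,
    Matrix.vecMul_transpose, Matrix.dotProduct_mulVec]

private lemma smul_one_posDef {p : ℕ} {γ : ℝ} (hγ : 0 < γ) :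
    (γ • (1 : Matrix (Fin p) (Fin p) ℝ)).PosDef := by
  rw [Matrix.posDef_iff_dotProduct_mulVec]
  constructor
  · show (γ • (1 : Matrix (Fin p) (Fin p) ℝ))ᴴ = _
    rw [Matrix.conjTranspose_smul, Matrix.conjTranspose_one, star_trivial]
  · intro x hx
    have h1 : (γ • (1 : Matrix (Fin p) (Fin p) ℝ)) *ᵥ x = γ • x := by
      rw [Matrix.smul_mulVec, Matrix.one_mulVec]
    rw [show (star x) = x by simp, h1]
    have h2 : x ⬝ᵥ (γ • x) = γ * (x ⬝ᵥ x) := by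
      simp [dotProduct_smul, smul_eq_mul]
    rw [h2]
    have hxx : 0 < x ⬝ᵥ x :=
      lt_of_le_of_ne (dot_self_nonneg' x)
        (fun hc => hx (dotProduct_self_eq_zero.mp hc.symm))
    exact mul_pos hγ hxx

/-- With `u† = ∑ⱼ (Θ⁻¹Aᵀ(γ1+Q)⁻¹z)ⱼ gⱼ` and
`v = ∑ᵢ ((γ1+G)⁻¹z)ᵢ kᵢ`, one has
`‖u† − v‖² ≤ 3‖(γ1+Q)⁻¹ − (γ1+G)⁻¹‖‖z‖²`. -/
theorem stmt_9 {H : Type*}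
    [NormedAddCommGroup H] [InnerProductSpace ℝ H] [CompleteSpace H]
    {n m : ℕ} (k : Fin n → H) (g : Fin m → H)
    (hk : LinearIndependent ℝ k) (hg : LinearIndependent ℝ g)
    (G : Matrix (Fin n) (Fin n) ℝ) (hG : ∀ i j, G i j = ⟪k i, k j⟫)
    (Θ : Matrix (Fin m) (Fin m) ℝ) (hΘ : ∀ i j, Θ i j = ⟪g i, g j⟫)
    (A : Matrix (Fin n) (Fin m) ℝ) (hA : ∀ i j, A i j = ⟪k i, g j⟫)
    (Q : Matrix (Fin n) (Fin n) ℝ) (hQ : Q = A * Θ⁻¹ * Aᵀ)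
    (γ : ℝ) (hγ : 0 < γ)
    (z : Fin n → ℝ) (ud v : H)
    (hud : ud = ∑ j, ((Θ⁻¹ * Aᵀ *
      (γ • (1 : Matrix (Fin n) (Fin n) ℝ) + Q)⁻¹) *ᵥ z) j • g j)
    (hv : v = ∑ i, (((γ • (1 : Matrix (Fin n) (Fin n) ℝ) + G)⁻¹) *ᵥ z) i • k i) :
    ‖ud - v‖ ^ 2 ≤
      3 * ‖(γ • (1 : Matrix (Fin n) (Fin n) ℝ) + Q)⁻¹ -
            (γ • (1 : Matrix (Fin n) (Fin n) ℝ) + G)⁻¹‖ * (z ⬝ᵥ z) := by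
  set B := γ • (1 : Matrix (Fin n) (Fin n) ℝ) + Q with hBdef
  set C := γ • (1 : Matrix (Fin n) (Fin n) ℝ) + G with hCdef
  -- positive definiteness
  have hΘpd : Θ.PosDef := gram_posDef g hg Θ hΘ
  have hGpd : G.PosDef := gram_posDef k hk G hG
  have hΘinv : Θ⁻¹ * Θ = 1 := Matrix.nonsing_inv_mul Θ hΘpd.det_pos.ne'.isUnit
  have hct : Aᴴ = Aᵀ := by
    ext i j; simp [Matrix.conjTranspose_apply]
  have hQpsd : Q.PosSemidef := by
    rw [hQ, ← hct]
    exact hΘpd.inv.posSemidef.mul_mul_conjTranspose_same A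
  have hBpd : B.PosDef := (smul_one_posDef hγ).add_posSemidef hQpsd
  have hCpd : C.PosDef := (smul_one_posDef hγ).add_posSemidef hGpd.posSemidef
  have hBinv : B⁻¹ * B = 1 := Matrix.nonsing_inv_mul B hBpd.det_pos.ne'.isUnit
  have hBinv' : B * B⁻¹ = 1 := Matrix.mul_nonsing_inv B hBpd.det_pos.ne'.isUnit
  have hCinv : C⁻¹ * C = 1 := Matrix.nonsing_inv_mul C hCpd.det_pos.ne'.isUnit
  have hCinv' : C * C⁻¹ = 1 := Matrix.mul_nonsing_inv C hCpd.det_pos.ne'.isUnit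
  -- symmetry facts
  have hΘt : Θᵀ = Θ := by
    ext i j; rw [Matrix.transpose_apply, hΘ, hΘ]; exact real_inner_comm _ _
  have hGt : Gᵀ = G := by
    ext i j; rw [Matrix.transpose_apply, hG, hG]; exact real_inner_comm _ _
  have hΘit : (Θ⁻¹)ᵀ = Θ⁻¹ := by rw [Matrix.transpose_nonsing_inv, hΘt]
  have hQt : Qᵀ = Q := by
    rw [hQ, Matrix.transpose_mul, Matrix.transpose_mul, Matrix.transpose_transpose, hΘit,
      Matrix.mul_assoc]
  have hBt : Bᵀ = B := by
    rw [hBdef, Matrix.transpose_add, Matrix.transpose_smul, Matrix.transpose_one, hQt]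
  have hCt : Cᵀ = C := by
    rw [hCdef, Matrix.transpose_add, Matrix.transpose_smul, Matrix.transpose_one, hGt]
  have hPt : (B⁻¹)ᵀ = B⁻¹ := by rw [Matrix.transpose_nonsing_inv, hBt]
  have hRt : (C⁻¹)ᵀ = C⁻¹ := by rw [Matrix.transpose_nonsing_inv, hCt]
  -- inner products as quadratic forms
  set K : Matrix (Fin m) (Fin n) ℝ := Θ⁻¹ * Aᵀ * B⁻¹ with hKdef
  have huu : ⟪ud, ud⟫ = (K *ᵥ z) ⬝ᵥ (Θ *ᵥ (K *ᵥ z)) := by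
    rw [hud]; exact inner_sum_smul g g Θ hΘ _ _
  have hvu : ⟪v, ud⟫ = (C⁻¹ *ᵥ z) ⬝ᵥ (A *ᵥ (K *ᵥ z)) := by
    rw [hv, hud]; exact inner_sum_smul k g A hA _ _
  have hvv : ⟪v, v⟫ = (C⁻¹ *ᵥ z) ⬝ᵥ (G *ᵥ (C⁻¹ *ᵥ z)) := by
    rw [hv]; exact inner_sum_smul k k G hG _ _
  -- matrix identities
  have e1 : Kᵀ * (Θ * K) = B⁻¹ * Q * B⁻¹ := by
    rw [hQ, hKdef]
    simp only [Matrix.transpose_mul, Matrix.transpose_transpose, hPt, hΘit]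
    simp only [Matrix.mul_assoc]
    rw [← Matrix.mul_assoc Θ⁻¹ Θ, hΘinv, Matrix.one_mul]
  have e2 : (C⁻¹)ᵀ * (A * K) = C⁻¹ * Q * B⁻¹ := by
    rw [hRt, hQ, hKdef]
    simp only [Matrix.mul_assoc]
  have e3 : (C⁻¹)ᵀ * (G * C⁻¹) = C⁻¹ * G * C⁻¹ := by
    rw [hRt, Matrix.mul_assoc]
  -- rewrite inner products through z
  have huu2 : ⟪ud, ud⟫ = z ⬝ᵥ ((B⁻¹ * Q * B⁻¹) *ᵥ z) := by
    rw [huu, Matrix.mulVec_mulVec, quad_form, e1]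
  have hvu2 : ⟪v, ud⟫ = z ⬝ᵥ ((C⁻¹ * Q * B⁻¹) *ᵥ z) := by
    rw [hvu, Matrix.mulVec_mulVec, quad_form, e2]
  have hvv2 : ⟪v, v⟫ = z ⬝ᵥ ((C⁻¹ * G * C⁻¹) *ᵥ z) := by
    rw [hvv, Matrix.mulVec_mulVec, quad_form, e3]
  -- resolvent algebra
  have hQB : Q = B - γ • (1 : Matrix (Fin n) (Fin n) ℝ) := by
    rw [hBdef]; abel
  have hGC : G = C - γ • (1 : Matrix (Fin n) (Fin n) ℝ) := by
    rw [hCdef]; abel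
  have f1 : B⁻¹ * Q * B⁻¹ = B⁻¹ - γ • (B⁻¹ * B⁻¹) := by
    rw [hQB, mul_sub, mul_smul_comm, mul_one, hBinv, sub_mul, one_mul, smul_mul_assoc]
  have f2 : C⁻¹ * Q * B⁻¹ = C⁻¹ - γ • (C⁻¹ * B⁻¹) := by
    rw [hQB, mul_sub, mul_smul_comm, mul_one, sub_mul, smul_mul_assoc,
      Matrix.mul_assoc C⁻¹ B B⁻¹, hBinv', mul_one]
  have f3 : C⁻¹ * G * C⁻¹ = C⁻¹ - γ • (C⁻¹ * C⁻¹) := by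
    rw [hGC, mul_sub, mul_smul_comm, mul_one, hCinv, sub_mul, one_mul, smul_mul_assoc]
  -- quadratic form conversions
  have q1 := quad_form B⁻¹ B⁻¹ z z
  rw [hPt] at q1
  have q2 := quad_form C⁻¹ B⁻¹ z z
  rw [hRt] at q2
  have q3 := quad_form C⁻¹ C⁻¹ z z
  rw [hRt] at q3
  have expand : ∀ X Y : Matrix (Fin n) (Fin n) ℝ,
      z ⬝ᵥ ((X - γ • Y) *ᵥ z) = z ⬝ᵥ (X *ᵥ z) - γ * (z ⬝ᵥ (Y *ᵥ z)) := by
    intro X Y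
    rw [Matrix.sub_mulVec, Matrix.smul_mulVec, dotProduct_sub,
      dotProduct_smul, smul_eq_mul]
  -- norm expansion
  have hnorm : ‖ud - v‖ ^ 2 = ⟪ud, ud⟫ - 2 * ⟪v, ud⟫ + ⟪v, v⟫ := by
    rw [@norm_sub_sq_real _ _ _ ud v, ← real_inner_self_eq_norm_sq,
      ← real_inner_self_eq_norm_sq, real_inner_comm ud v]
  set D := B⁻¹ - C⁻¹ with hDdef
  have hDz : z ⬝ᵥ (D *ᵥ z) = z ⬝ᵥ (B⁻¹ *ᵥ z) - z ⬝ᵥ (C⁻¹ *ᵥ z) := by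
    rw [hDdef, Matrix.sub_mulVec, dotProduct_sub]
  have Sexp : (B⁻¹ *ᵥ z - C⁻¹ *ᵥ z) ⬝ᵥ (B⁻¹ *ᵥ z - C⁻¹ *ᵥ z)
      = (B⁻¹ *ᵥ z) ⬝ᵥ (B⁻¹ *ᵥ z) - 2 * ((C⁻¹ *ᵥ z) ⬝ᵥ (B⁻¹ *ᵥ z))
        + (C⁻¹ *ᵥ z) ⬝ᵥ (C⁻¹ *ᵥ z) := by
    rw [sub_dotProduct, dotProduct_sub, dotProduct_sub,
      dotProduct_comm (B⁻¹ *ᵥ z) (C⁻¹ *ᵥ z)]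
    ring
  have Snonneg : 0 ≤ (B⁻¹ *ᵥ z - C⁻¹ *ᵥ z) ⬝ᵥ (B⁻¹ *ᵥ z - C⁻¹ *ᵥ z) :=
    dot_self_nonneg' _
  have main : ‖ud - v‖ ^ 2 = z ⬝ᵥ (D *ᵥ z)
      - γ * ((B⁻¹ *ᵥ z - C⁻¹ *ᵥ z) ⬝ᵥ (B⁻¹ *ᵥ z - C⁻¹ *ᵥ z)) := by
    rw [hnorm, huu2, hvu2, hvv2, f1, f2, f3, expand, expand, expand, Sexp, hDz,
      ← q1, ← q2, ← q3]
    ring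
  -- operator norm bound
  have h1 : z ⬝ᵥ (D *ᵥ z)
      = ⟪(WithLp.equiv 2 (Fin n → ℝ)).symm z, (WithLp.equiv 2 (Fin n → ℝ)).symm (D *ᵥ z)⟫ := by
    rw [WithLp.equiv_symm_apply, EuclideanSpace.inner_toLp_toLp, show star z = z from by simp,
      dotProduct_comm]
  have h2 := real_inner_le_norm ((WithLp.equiv 2 (Fin n → ℝ)).symm z)
    ((WithLp.equiv 2 (Fin n → ℝ)).symm (D *ᵥ z))
  have h3 : ‖(WithLp.equiv 2 (Fin n → ℝ)).symm (D *ᵥ z)‖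
      ≤ ‖D‖ * ‖(WithLp.equiv 2 (Fin n → ℝ)).symm z‖ :=
    Matrix.l2_opNorm_mulVec D ((WithLp.equiv 2 (Fin n → ℝ)).symm z)
  have h4 : ‖(WithLp.equiv 2 (Fin n → ℝ)).symm z‖ * ‖(WithLp.equiv 2 (Fin n → ℝ)).symm z‖
      = z ⬝ᵥ z := by
    rw [← real_inner_self_eq_norm_mul_norm, WithLp.equiv_symm_apply, EuclideanSpace.inner_toLp_toLp,
      show star z = z from by simp]
  have hDbound : z ⬝ᵥ (D *ᵥ z) ≤ ‖D‖ * (z ⬝ᵥ z) := by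
    rw [h1, ← h4]
    calc ⟪(WithLp.equiv 2 (Fin n → ℝ)).symm z, (WithLp.equiv 2 (Fin n → ℝ)).symm (D *ᵥ z)⟫
        ≤ ‖(WithLp.equiv 2 (Fin n → ℝ)).symm z‖ * ‖(WithLp.equiv 2 (Fin n → ℝ)).symm (D *ᵥ z)‖ := h2
      _ ≤ ‖(WithLp.equiv 2 (Fin n → ℝ)).symm z‖ * (‖D‖ * ‖(WithLp.equiv 2 (Fin n → ℝ)).symm z‖) :=
          mul_le_mul_of_nonneg_left h3 (norm_nonneg _)
      _ = ‖D‖ * (‖(WithLp.equiv 2 (Fin n → ℝ)).symm z‖ * ‖(WithLp.equiv 2 (Fin n → ℝ)).symm z‖) := by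
          ring
  nlinarith [main, hDbound, Snonneg, mul_nonneg hγ.le Snonneg,
    mul_nonneg (norm_nonneg D) (dot_self_nonneg' z)]
end

section
/- For all z, b ∈ ℝ^n, let v := Σ_{i=1}^n ((γ·1 + G)⁻¹·z)_i · k_i ∈ H and û := Σ_{i=1}^n ((γ·1 + G)⁻¹·b)_i · k_i ∈ H. Then ‖v − û‖² ≤ (z − b)ᵀG⁻¹(z − b). -/
open Matrix
open scoped RealInnerProductSpace

section aux

variable {H : Type*} [NormedAddCommGroup H] [InnerProductSpace ℝ H]
variable {n : ℕ}

lemma inner_sum_sum_eq (k : Fin n → H) (G : Matrix (Fin n) (Fin n) ℝ)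
    (hG : ∀ i j, G i j = ⟪k i, k j⟫) (c d : Fin n → ℝ) :
    ⟪∑ i, c i • k i, ∑ j, d j • k j⟫ = c ⬝ᵥ (G *ᵥ d) := by
  simp only [sum_inner, inner_sum, real_inner_smul_left, real_inner_smul_right,
    dotProduct, mulVec, hG, Finset.mul_sum]
  rw [Finset.sum_comm]
  exact Finset.sum_congr rfl fun i _ => Finset.sum_congr rfl fun j _ => by
    rw [real_inner_comm (k j) (k i)]; ring

lemma gram_posDef_s10 (k : Fin n → H) (hk : LinearIndependent ℝ k)
    (G : Matrix (Fin n) (Fin n) ℝ) (hG : ∀ i j, G i j = ⟪k i, k j⟫) :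
    G.PosDef := by
  refine Matrix.posDef_iff_dotProduct_mulVec.mpr ⟨?_, ?_⟩
  · ext i j
    simp only [IsHermitian, conjTranspose_apply, star_trivial, transpose_apply] at *
    rw [hG, hG, real_inner_comm]
  · intro x hx
    have hsum : ‖∑ i, x i • k i‖ ≠ 0 := by
      rw [norm_ne_zero_iff]
      intro h
      exact hx (funext fun i => (Fintype.linearIndependent_iff.mp hk x h) i)
    have := inner_sum_sum_eq k G hG x x
    have hpos : (0:ℝ) < ⟪∑ i, x i • k i, ∑ i, x i • k i⟫ := by
      rw [real_inner_self_eq_norm_sq]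
      positivity
    simpa only [star_trivial, ← this] using hpos

end aux

/-- With `v = ∑ᵢ ((γ1+G)⁻¹z)ᵢ kᵢ` and
`û = ∑ᵢ ((γ1+G)⁻¹b)ᵢ kᵢ`, one has `‖v − û‖² ≤ (z−b)ᵀG⁻¹(z−b)`. -/
theorem stmt_10 {H : Type*}
    [NormedAddCommGroup H] [InnerProductSpace ℝ H]
    {n : ℕ} (k : Fin n → H) (hk : LinearIndependent ℝ k)
    (G : Matrix (Fin n) (Fin n) ℝ) (hG : ∀ i j, G i j = ⟪k i, k j⟫)
    (γ : ℝ) (hγ : 0 < γ)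
    (z b : Fin n → ℝ) (v uhat : H)
    (hv : v = ∑ i, (((γ • (1 : Matrix (Fin n) (Fin n) ℝ) + G)⁻¹) *ᵥ z) i • k i)
    (huhat : uhat =
      ∑ i, (((γ • (1 : Matrix (Fin n) (Fin n) ℝ) + G)⁻¹) *ᵥ b) i • k i) :
    ‖v - uhat‖ ^ 2 ≤ (z - b) ⬝ᵥ (G⁻¹ *ᵥ (z - b)) := by
  set A : Matrix (Fin n) (Fin n) ℝ := γ • (1 : Matrix (Fin n) (Fin n) ℝ) + G with hA
  have hGpd : G.PosDef := gram_posDef_s10 k hk G hG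
  have hApd : A.PosDef := by
    have h1 : (γ • (1 : Matrix (Fin n) (Fin n) ℝ)).PosDef := by
      rw [Matrix.smul_one_eq_diagonal]
      exact Matrix.PosDef.diagonal fun _ => hγ
    exact h1.add hGpd
  have hAunit := hApd.isUnit
  have hGunit := hGpd.isUnit
  set c : Fin n → ℝ := A⁻¹ *ᵥ (z - b) with hc
  have hvu : v - uhat = ∑ i, c i • k i := by
    rw [hv, huhat, ← Finset.sum_sub_distrib]
    congr 1; ext i
    rw [hc, Matrix.mulVec_sub, ← sub_smul]
    rfl
  -- z - b = A *ᵥ c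
  have hzb : z - b = A *ᵥ c := by
    rw [hc, Matrix.mulVec_mulVec, Matrix.mul_nonsing_inv _ (isUnit_iff_isUnit_det _ |>.mp hAunit),
      Matrix.one_mulVec]
  -- LHS = c ⬝ᵥ G *ᵥ c
  have hLHS : ‖v - uhat‖ ^ 2 = c ⬝ᵥ (G *ᵥ c) := by
    rw [← real_inner_self_eq_norm_sq, hvu, inner_sum_sum_eq k G hG]
  -- matrix identity
  have hGG : G * G⁻¹ = 1 := Matrix.mul_nonsing_inv _ (isUnit_iff_isUnit_det _ |>.mp hGunit)
  have hG'G : G⁻¹ * G = 1 := Matrix.nonsing_inv_mul _ (isUnit_iff_isUnit_det _ |>.mp hGunit)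
  have hAT : Aᵀ = A := by
    rw [← Matrix.conjTranspose_eq_transpose_of_trivial]
    exact hApd.isHermitian.eq
  have hMid : Aᵀ * G⁻¹ * A = (γ^2) • G⁻¹ + (2*γ) • 1 + G := by
    rw [hAT, hA, show (2*γ) = γ + γ by ring, add_smul]
    rw [Matrix.add_mul, Matrix.add_mul, Matrix.mul_add, Matrix.mul_add]
    simp only [Matrix.smul_mul, Matrix.mul_smul, Matrix.one_mul, Matrix.mul_one, hGG, hG'G,
      smul_smul]
    rw [show γ * γ = γ^2 by ring]
    abel
  -- RHS = c ⬝ᵥ (Aᵀ * G⁻¹ * A) *ᵥ c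
  have hRHS : (z - b) ⬝ᵥ (G⁻¹ *ᵥ (z - b)) = c ⬝ᵥ ((Aᵀ * G⁻¹ * A) *ᵥ c) := by
    rw [hzb, Matrix.dotProduct_mulVec, Matrix.vecMul_mulVec, ← Matrix.dotProduct_mulVec,
      Matrix.mulVec_mulVec, Matrix.mul_assoc, Matrix.mulVec_mulVec]
  rw [hLHS, hRHS, hMid]
  have hexp : c ⬝ᵥ (((γ^2) • G⁻¹ + (2*γ) • 1 + G) *ᵥ c)
      = γ^2 * (c ⬝ᵥ (G⁻¹ *ᵥ c)) + (2*γ) * (c ⬝ᵥ c) + c ⬝ᵥ (G *ᵥ c) := by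
    simp [Matrix.add_mulVec, Matrix.smul_mulVec, dotProduct_add, dotProduct_smul,
      Matrix.one_mulVec, smul_eq_mul]
  rw [hexp]
  have h1 : 0 ≤ γ^2 * (c ⬝ᵥ (G⁻¹ *ᵥ c)) := by
    rcases eq_or_ne c 0 with h | h
    · simp [h]
    · have := hGpd.inv.dotProduct_mulVec_pos h
      simp only [star_trivial] at this
      positivity
  have h2 : 0 ≤ (2*γ) * (c ⬝ᵥ c) := by
    have : 0 ≤ c ⬝ᵥ c := by
      simp only [dotProduct]
      exact Finset.sum_nonneg fun i _ => mul_self_nonneg _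
    positivity
  linarith
end

section
/- For every b ∈ ℝ^n, let û := Σ_{i=1}^n ((γ·1 + G)⁻¹·b)_i · k_i ∈ H and ū := Σ_{i=1}^n (G⁻¹·b)_i · k_i ∈ H. Then ‖û − ū‖² ≤ γ²·bᵀ(G⁻¹)³b. -/
open Matrix
open scoped RealInnerProductSpace

/-- With `û = ∑ᵢ ((γ1+G)⁻¹b)ᵢ kᵢ` and `ū = ∑ᵢ (G⁻¹b)ᵢ kᵢ`,
one has `‖û − ū‖² ≤ γ²·bᵀ(G⁻¹)³b`. -/
theorem stmt_11 {H : Type*}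
    [NormedAddCommGroup H] [InnerProductSpace ℝ H]
    {n : ℕ} (k : Fin n → H) (hk : LinearIndependent ℝ k)
    (G : Matrix (Fin n) (Fin n) ℝ) (hG : ∀ i j, G i j = ⟪k i, k j⟫)
    (γ : ℝ) (hγ : 0 < γ)
    (b : Fin n → ℝ) (uhat ubar : H)
    (huhat : uhat =
      ∑ i, (((γ • (1 : Matrix (Fin n) (Fin n) ℝ) + G)⁻¹) *ᵥ b) i • k i)
    (hubar : ubar = ∑ i, (G⁻¹ *ᵥ b) i • k i) :
    ‖uhat - ubar‖ ^ 2 ≤ γ ^ 2 * (b ⬝ᵥ ((G⁻¹ ^ 3) *ᵥ b)) := by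
  set A : Matrix (Fin n) (Fin n) ℝ := γ • (1 : Matrix (Fin n) (Fin n) ℝ) + G with hA
  -- quadratic form = Gram
  have key : ∀ c d : Fin n → ℝ, ⟪∑ i, c i • k i, ∑ i, d i • k i⟫ = c ⬝ᵥ (G *ᵥ d) := by
    intro c d
    have hGs : ∀ i j, G i j = G j i := fun i j => by rw [hG, hG, real_inner_comm]
    simp only [sum_inner, inner_sum, real_inner_smul_left, real_inner_smul_right,
      dotProduct, mulVec, ← hG, Finset.mul_sum]
    rw [Finset.sum_comm]
    refine Finset.sum_congr rfl fun i _ => Finset.sum_congr rfl fun j _ => ?_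
    ring
  have hGpd : G.PosDef := by
    rw [Matrix.posDef_iff_dotProduct_mulVec]
    constructor
    · ext i j
      simp [Matrix.conjTranspose_apply, hG, real_inner_comm]
    · intro x hx
      have h0 : ∑ i, x i • k i ≠ 0 := by
        intro h
        exact hx (funext fun i => Fintype.linearIndependent_iff.mp hk x h i)
      have := key x x
      rw [real_inner_self_eq_norm_sq] at this
      simp only [star_trivial]
      rw [← this]
      exact pow_pos (norm_pos_iff.mpr h0) 2
  have hApd : A.PosDef := by
    rw [Matrix.posDef_iff_dotProduct_mulVec]
    constructor
    · ext i j
      simp [hA, Matrix.conjTranspose_apply, Matrix.one_apply, Matrix.add_apply, hG,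
        real_inner_comm, eq_comm]
    · intro x hx
      have h1 : star x ⬝ᵥ (A *ᵥ x) = γ * (x ⬝ᵥ x) + star x ⬝ᵥ (G *ᵥ x) := by
        simp [hA, Matrix.add_mulVec, Matrix.smul_mulVec, dotProduct_add,
          dotProduct_smul, smul_eq_mul]
      rw [h1]
      have h2 : 0 < x ⬝ᵥ x := by
        simpa using dotProduct_star_self_pos_iff.mpr hx
      exact add_pos (mul_pos hγ h2) (hGpd.dotProduct_mulVec_pos hx)
  have hGd : IsUnit G.det := hGpd.det_pos.ne'.isUnit
  have hAd : IsUnit A.det := hApd.det_pos.ne'.isUnit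
  -- symmetry of inverses (as transpose)
  have hsymm : ∀ {M : Matrix (Fin n) (Fin n) ℝ}, M.IsHermitian → Mᵀ = M := by
    intro M hM
    ext i j
    have := congrFun (congrFun hM i) j
    simpa [Matrix.conjTranspose_apply] using this
  have hGinvT : G⁻¹ᵀ = G⁻¹ := hsymm hGpd.inv.isHermitian
  have hAinvT : A⁻¹ᵀ = A⁻¹ := hsymm hApd.inv.isHermitian
  -- vecMul/mulVec for symmetric matrices
  have hvm : ∀ (M : Matrix (Fin n) (Fin n) ℝ) (x : Fin n → ℝ), Mᵀ = M → x ᵥ* M = M *ᵥ x := by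
    intro M x h
    rw [← Matrix.mulVec_transpose, h]
  -- powers of G⁻¹ absorbed by G
  have hGi3' : G⁻¹ ^ 3 * G = G⁻¹ ^ 2 := by
    rw [pow_succ, Matrix.mul_assoc, Matrix.nonsing_inv_mul G hGd, Matrix.mul_one]
  have hGi3 : G * G⁻¹ ^ 3 = G⁻¹ ^ 2 := by
    rw [pow_succ', ← Matrix.mul_assoc, Matrix.mul_nonsing_inv G hGd, Matrix.one_mul]
  have hGi2' : G⁻¹ ^ 2 * G = G⁻¹ := by
    rw [pow_two, Matrix.mul_assoc, Matrix.nonsing_inv_mul G hGd, Matrix.mul_one]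
  set M : Matrix (Fin n) (Fin n) ℝ := γ ^ 2 • G⁻¹ ^ 3 + (2 * γ) • G⁻¹ ^ 2 + G⁻¹ with hM
  have hkey : A * (G⁻¹ ^ 3) * A = M := by
    rw [hA, hM]
    simp only [Matrix.add_mul, Matrix.mul_add, Matrix.smul_mul, Matrix.mul_smul,
      Matrix.one_mul, Matrix.mul_one, hGi3, hGi3', smul_smul]
    rw [hGi2']
    module
  have sandwich : ∀ X : Matrix (Fin n) (Fin n) ℝ, A⁻¹ * (A * X * A) * A⁻¹ = X := by
    intro X
    calc A⁻¹ * (A * X * A) * A⁻¹ = (A⁻¹ * A) * X * (A * A⁻¹) := by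
          simp only [Matrix.mul_assoc]
      _ = X := by
          rw [Matrix.nonsing_inv_mul A hAd, Matrix.mul_nonsing_inv A hAd,
            Matrix.one_mul, Matrix.mul_one]
  have hmain : G⁻¹ ^ 3 = A⁻¹ * M * A⁻¹ := by
    rw [← hkey, sandwich]
  set y : Fin n → ℝ := A⁻¹ *ᵥ b with hy
  -- RHS expansion
  have hRHS : b ⬝ᵥ ((G⁻¹ ^ 3) *ᵥ b) =
      γ ^ 2 * (y ⬝ᵥ (G⁻¹ ^ 3 *ᵥ y)) + 2 * γ * (y ⬝ᵥ (G⁻¹ ^ 2 *ᵥ y)) + y ⬝ᵥ (G⁻¹ *ᵥ y) := by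
    conv_lhs => rw [hmain, Matrix.mul_assoc, ← Matrix.mulVec_mulVec, ← Matrix.mulVec_mulVec,
      Matrix.dotProduct_mulVec, hvm A⁻¹ b hAinvT, ← hy]
    simp only [hM, Matrix.add_mulVec, Matrix.smul_mulVec, dotProduct_add,
      dotProduct_smul, smul_eq_mul]
  -- LHS computation
  have hcinv : A⁻¹ - G⁻¹ = (-γ) • (G⁻¹ * A⁻¹) := by
    have h1 : G * (A⁻¹ - G⁻¹) * A = (-γ) • (1 : Matrix (Fin n) (Fin n) ℝ) := by
      rw [Matrix.mul_sub, Matrix.sub_mul, Matrix.mul_assoc, Matrix.nonsing_inv_mul A hAd,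
        Matrix.mul_one, Matrix.mul_nonsing_inv G hGd, Matrix.one_mul, hA]
      ext i j
      by_cases h : i = j <;>
        simp [Matrix.sub_apply, Matrix.add_apply, Matrix.smul_apply, Matrix.one_apply, h]
    have h2 : A⁻¹ - G⁻¹ = G⁻¹ * (G * (A⁻¹ - G⁻¹) * A) * A⁻¹ := by
      have : G⁻¹ * (G * (A⁻¹ - G⁻¹) * A) * A⁻¹ = (G⁻¹ * G) * (A⁻¹ - G⁻¹) * (A * A⁻¹) := by
        simp only [Matrix.mul_assoc]
      rw [this, Matrix.nonsing_inv_mul G hGd, Matrix.mul_nonsing_inv A hAd,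
        Matrix.one_mul, Matrix.mul_one]
    rw [h2, h1]
    rw [Matrix.mul_smul, Matrix.mul_one, Matrix.smul_mul]
  have hdiff : uhat - ubar = ∑ i, ((A⁻¹ *ᵥ b - G⁻¹ *ᵥ b) i) • k i := by
    rw [huhat, hubar, ← Finset.sum_sub_distrib]
    congr 1; ext i
    simp [sub_smul, hy]
  have hLHS : ‖uhat - ubar‖ ^ 2 = γ ^ 2 * (y ⬝ᵥ (G⁻¹ *ᵥ y)) := by
    have h1 : ‖uhat - ubar‖ ^ 2 =
        (A⁻¹ *ᵥ b - G⁻¹ *ᵥ b) ⬝ᵥ (G *ᵥ (A⁻¹ *ᵥ b - G⁻¹ *ᵥ b)) := by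
      rw [← real_inner_self_eq_norm_sq, hdiff, key]
    have h2 : A⁻¹ *ᵥ b - G⁻¹ *ᵥ b = (-γ) • (G⁻¹ *ᵥ y) := by
      rw [← Matrix.sub_mulVec, hcinv, Matrix.smul_mulVec, ← Matrix.mulVec_mulVec, hy]
    rw [h1, h2]
    have h4 : G *ᵥ (G⁻¹ *ᵥ y) = y := by
      rw [Matrix.mulVec_mulVec, Matrix.mul_nonsing_inv G hGd, Matrix.one_mulVec]
    have h3 : (G⁻¹ *ᵥ y) ⬝ᵥ (G *ᵥ (G⁻¹ *ᵥ y)) = y ⬝ᵥ (G⁻¹ *ᵥ y) := by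
      rw [h4, dotProduct_comm]
    rw [Matrix.mulVec_smul, smul_dotProduct, dotProduct_smul, smul_eq_mul, smul_eq_mul, h3]
    ring
  -- nonnegativity
  have hq3 : 0 ≤ y ⬝ᵥ (G⁻¹ ^ 3 *ᵥ y) := by
    simpa using (hGpd.inv.posSemidef.pow 3).dotProduct_mulVec_nonneg y
  have hq2 : 0 ≤ y ⬝ᵥ (G⁻¹ ^ 2 *ᵥ y) := by
    simpa using (hGpd.inv.posSemidef.pow 2).dotProduct_mulVec_nonneg y
  rw [hLHS, hRHS]
  have e1 : 0 ≤ γ ^ 2 * (γ ^ 2 * (y ⬝ᵥ (G⁻¹ ^ 3 *ᵥ y))) :=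
    mul_nonneg (sq_nonneg γ) (mul_nonneg (sq_nonneg γ) hq3)
  have e2 : 0 ≤ γ ^ 2 * (2 * γ * (y ⬝ᵥ (G⁻¹ ^ 2 *ᵥ y))) :=
    mul_nonneg (sq_nonneg γ) (mul_nonneg (by positivity) hq2)
  nlinarith [e1, e2]
end

section
/- For every β ∈ ℝ^n, the squared distance from Σ_{i=1}^n β_i k_i to the span of {g_1, …, g_m} satisfies inf_{v ∈ span{g_1, …, g_m}} ‖v − Σ_{i=1}^n β_i k_i‖² = βᵀ(G − A·Θ⁻¹·Aᵀ)β; in particular, the matrix G − A·Θ⁻¹·Aᵀ is symmetric positive semidefinite. -/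
open Matrix
open scoped RealInnerProductSpace

section aux

variable {H : Type*} [NormedAddCommGroup H] [InnerProductSpace ℝ H]

lemma aux_inner_sum_left {p : ℕ} (a : Fin p → ℝ) (u : Fin p → H) (y : H) :
    ⟪∑ j, a j • u j, y⟫ = ∑ j, a j * ⟪u j, y⟫ := by
  simp [sum_inner, real_inner_smul_left]

lemma aux_inner_sum_right {p : ℕ} (a : Fin p → ℝ) (u : Fin p → H) (y : H) :
    ⟪y, ∑ j, a j • u j⟫ = ∑ j, a j * ⟪y, u j⟫ := by
  simp [inner_sum, real_inner_smul_right]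

end aux

/-- For every `β ∈ ℝⁿ`,
`inf_{v ∈ span g} ‖v − ∑ᵢ βᵢ kᵢ‖² = βᵀ(G − AΘ⁻¹Aᵀ)β`; in particular
`G − AΘ⁻¹Aᵀ` is symmetric positive semidefinite. -/
theorem stmt_14 {H : Type*}
    [NormedAddCommGroup H] [InnerProductSpace ℝ H]
    {n m : ℕ} (k : Fin n → H) (g : Fin m → H)
    (hg : LinearIndependent ℝ g)
    (G : Matrix (Fin n) (Fin n) ℝ) (hG : ∀ i j, G i j = ⟪k i, k j⟫)
    (Θ : Matrix (Fin m) (Fin m) ℝ) (hΘ : ∀ i j, Θ i j = ⟪g i, g j⟫)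
    (A : Matrix (Fin n) (Fin m) ℝ) (hA : ∀ i j, A i j = ⟪k i, g j⟫) :
    (∀ β : Fin n → ℝ,
      (⨅ v : Submodule.span ℝ (Set.range g),
        ‖(v : H) - ∑ i, β i • k i‖ ^ 2) =
        β ⬝ᵥ ((G - A * Θ⁻¹ * Aᵀ) *ᵥ β)) ∧
    (G - A * Θ⁻¹ * Aᵀ).PosSemidef := by
  -- Θ is positive definite
  have hΘsymm : Θ.IsHermitian := by
    ext i j
    simp [Matrix.conjTranspose_apply, hΘ, real_inner_comm]
  have hΘpd : Θ.PosDef := by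
    refine Matrix.PosDef.of_dotProduct_mulVec_pos hΘsymm fun x hx => ?_
    have hxg : (∑ j, x j • g j) ≠ 0 := by
      intro hsum
      exact hx (funext fun i => (Fintype.linearIndependent_iff.mp hg x hsum) i)
    have key : (star x) ⬝ᵥ (Θ *ᵥ x) = ⟪∑ i, x i • g i, ∑ j, x j • g j⟫ := by
      rw [aux_inner_sum_left]
      simp only [aux_inner_sum_right]
      simp [dotProduct, Matrix.mulVec, hΘ, Finset.mul_sum, mul_comm, mul_left_comm]
    rw [key, real_inner_self_eq_norm_sq]
    exact pow_pos (norm_pos_iff.mpr hxg) 2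
  have hdet : IsUnit Θ.det := (Matrix.isUnit_iff_isUnit_det Θ).mp hΘpd.isUnit
  have hΘinv1 : Θ * Θ⁻¹ = 1 := Matrix.mul_nonsing_inv _ hdet
  have hΘinvsymm : Θ⁻¹ᵀ = Θ⁻¹ := by
    have h2 : Θᵀ = Θ := by
      ext i j; simp [Matrix.transpose_apply, hΘ, real_inner_comm]
    rw [Matrix.transpose_nonsing_inv, h2]
  -- Main computation for each β
  have main : ∀ β : Fin n → ℝ,
      (⨅ v : Submodule.span ℝ (Set.range g),
        ‖(v : H) - ∑ i, β i • k i‖ ^ 2) =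
        β ⬝ᵥ ((G - A * Θ⁻¹ * Aᵀ) *ᵥ β) := by
    intro β
    set x : H := ∑ i, β i • k i with hx
    set c : Fin m → ℝ := Θ⁻¹ *ᵥ (Aᵀ *ᵥ β) with hc
    set w : H := ∑ j, c j • g j with hw
    have hwmem : w ∈ Submodule.span ℝ (Set.range g) :=
      Submodule.sum_mem _ fun j _ =>
        Submodule.smul_mem _ _ (Submodule.subset_span ⟨j, rfl⟩)
    -- inner products with g i
    have hxg : ∀ i, ⟪x, g i⟫ = (Aᵀ *ᵥ β) i := by
      intro i
      rw [hx, aux_inner_sum_left]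
      simp [Matrix.mulVec, dotProduct, hA, mul_comm]
    have hΘc : Θ *ᵥ c = Aᵀ *ᵥ β := by
      rw [hc, Matrix.mulVec_mulVec, hΘinv1, Matrix.one_mulVec]
    have hwg : ∀ i, ⟪w, g i⟫ = (Aᵀ *ᵥ β) i := by
      intro i
      rw [hw, aux_inner_sum_left, ← hΘc]
      simp only [Matrix.mulVec, dotProduct]
      refine Finset.sum_congr rfl fun j _ => ?_
      rw [hΘ, mul_comm, real_inner_comm (g j) (g i)]
    -- orthogonality of x - w to the span
    have horth : ∀ v ∈ Submodule.span ℝ (Set.range g), ⟪x - w, v⟫ = 0 := by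
      intro v hv
      induction hv using Submodule.span_induction with
      | mem v hv =>
        obtain ⟨i, rfl⟩ := hv
        rw [inner_sub_left, hxg, hwg, sub_self]
      | zero => simp
      | add _ _ _ _ h1 h2 => rw [inner_add_right, h1, h2, add_zero]
      | smul r _ _ h1 => rw [inner_smul_right, h1, mul_zero]
    -- value at the minimizer
    have hval : ‖x - w‖ ^ 2 = β ⬝ᵥ ((G - A * Θ⁻¹ * Aᵀ) *ᵥ β) := by
      have h1 : ‖x - w‖ ^ 2 = ⟪x - w, x⟫ := by
        have h0 : ⟪x - w, w⟫ = 0 := horth w hwmem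
        rw [← real_inner_self_eq_norm_sq]
        rw [inner_sub_right, h0, sub_zero]
      have hxx : ⟪x, x⟫ = β ⬝ᵥ (G *ᵥ β) := by
        rw [hx, aux_inner_sum_left]
        simp only [aux_inner_sum_right]
        simp [dotProduct, Matrix.mulVec, hG, Finset.mul_sum, mul_comm,
          mul_left_comm]
      have hwx : ⟪x, w⟫ = β ⬝ᵥ ((A * Θ⁻¹ * Aᵀ) *ᵥ β) := by
        have h3 : ⟪x, w⟫ = β ⬝ᵥ (A *ᵥ c) := by
          rw [hx, aux_inner_sum_left]
          simp only [hw, aux_inner_sum_right]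
          simp [dotProduct, Matrix.mulVec, hA, mul_comm]
        rw [h3, hc, Matrix.mulVec_mulVec, Matrix.mulVec_mulVec]
      rw [h1, inner_sub_left, hxx, real_inner_comm x w, hwx, Matrix.sub_mulVec,
        dotProduct_sub]
    -- the infimum is attained at w
    have hub : ∀ v : Submodule.span ℝ (Set.range g),
        ‖x - w‖ ^ 2 ≤ ‖(v : H) - x‖ ^ 2 := by
      intro v
      have hvw : ⟪(v : H) - w, x - w⟫ = 0 := by
        rw [real_inner_comm]
        exact horth _ (Submodule.sub_mem _ v.2 hwmem)
      have hdecomp : (v : H) - x = ((v : H) - w) - (x - w) := by abel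
      have hpyth : ‖(v : H) - x‖ ^ 2 = ‖(v : H) - w‖ ^ 2 + ‖x - w‖ ^ 2 := by
        rw [hdecomp, norm_sub_sq_real ((v : H) - w) (x - w), hvw]; ring
      rw [hpyth]
      exact le_add_of_nonneg_left (by positivity)
    refine le_antisymm ?_ ?_
    · have := ciInf_le (f := fun v : Submodule.span ℝ (Set.range g) => ‖(v : H) - x‖ ^ 2)
        ⟨0, fun y hy => by obtain ⟨v, rfl⟩ := hy; positivity⟩ ⟨w, hwmem⟩
      calc (⨅ v : Submodule.span ℝ (Set.range g), ‖(v : H) - x‖ ^ 2)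
          ≤ ‖w - x‖ ^ 2 := this
        _ = β ⬝ᵥ ((G - A * Θ⁻¹ * Aᵀ) *ᵥ β) := by rw [← hval, ← norm_neg, neg_sub]
    · rw [← hval]
      exact le_ciInf hub
  refine ⟨main, ?_⟩
  refine Matrix.PosSemidef.of_dotProduct_mulVec_nonneg ?_ ?_
  · -- Hermitian
    have hGsymm : Gᵀ = G := by
      ext i j; simp [Matrix.transpose_apply, hG, real_inner_comm]
    have : (G - A * Θ⁻¹ * Aᵀ)ᵀ = G - A * Θ⁻¹ * Aᵀ := by
      rw [Matrix.transpose_sub, hGsymm, Matrix.transpose_mul, Matrix.transpose_mul,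
        Matrix.transpose_transpose, hΘinvsymm, Matrix.mul_assoc]
    simpa [Matrix.IsHermitian] using this
  · intro β
    have h := main β
    simp only [star_trivial]
    rw [← h]
    exact Real.iInf_nonneg fun v => by positivity
end

section
/- Let V ⊆ H be a nonempty subset and let r₁ ∈ {0, …, R₁} and r₂ ∈ {0, …, R₂}. Then sup_{‖b‖² + ‖b'‖² ≤ 1} d(u(b, b'), V) ≤ 2·sup_{‖b‖² + ‖b'‖² ≤ 1, b_j = 0 for j > r₁, b'_j = 0 for j > r₂} d(u(b, b'), V) + 4·λ_{r₁+1} + 4·τ_{r₂+1}, with the conventions λ_{R₁+1} = 0 and τ_{R₂+1} = 0. -/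
open Matrix
open scoped RealInnerProductSpace

open Matrix
open scoped RealInnerProductSpace

lemma aux_sq_add {H : Type*} [NormedAddCommGroup H] (x y : H) :
    ‖x + y‖ ^ 2 ≤ 2 * ‖x‖ ^ 2 + 2 * ‖y‖ ^ 2 := by
  have h := norm_add_le x y
  have h2 : ‖x + y‖ ^ 2 ≤ (‖x‖ + ‖y‖) ^ 2 :=
    pow_le_pow_left₀ (norm_nonneg _) h 2
  nlinarith [sq_nonneg (‖x‖ - ‖y‖)]

lemma aux_inner17 {H : Type*} [NormedAddCommGroup H] [InnerProductSpace ℝ H]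
    {n : ℕ} (k : Fin n → H) (G : Matrix (Fin n) (Fin n) ℝ)
    (hG : ∀ i j, G i j = ⟪k i, k j⟫)
    (v : Fin n → Fin n → ℝ)
    (hvON : ∀ j j', v j ⬝ᵥ v j' = if j = j' then 1 else 0)
    (μ : Fin n → ℝ) (hveig : ∀ j, G *ᵥ v j = μ j • v j)
    (g : Fin n → H) (hg : ∀ j, g j = ∑ i, v j i • k i) :
    ∀ i j, ⟪g i, g j⟫ = if i = j then μ j else 0 := by
  intro i j
  have h1 : ⟪g i, g j⟫ = v i ⬝ᵥ (G *ᵥ v j) := by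
    simp only [hg, sum_inner, inner_sum, real_inner_smul_left, real_inner_smul_right,
      dotProduct, mulVec, ← hG]
    rw [Finset.sum_comm]
    congr 1; funext a
    rw [Finset.mul_sum]
    congr 1; funext b
    ring
  rw [h1, hveig, dotProduct_smul, smul_eq_mul, hvON]
  split_ifs <;> ring

lemma aux_norm_sum17 {H : Type*} [NormedAddCommGroup H] [InnerProductSpace ℝ H]
    {n : ℕ} (g : Fin n → H) (μ : Fin n → ℝ)
    (hg : ∀ i j, ⟪g i, g j⟫ = if i = j then μ j else 0) (c : Fin n → ℝ) :
    ‖∑ j, c j • g j‖ ^ 2 = ∑ j, c j ^ 2 * μ j := by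
  rw [← real_inner_self_eq_norm_sq]
  rw [sum_inner]
  simp_rw [inner_sum, real_inner_smul_left, real_inner_smul_right, hg, mul_ite, mul_zero,
    Finset.sum_ite_eq, Finset.mem_univ, if_true]
  congr 1; funext a; ring

lemma aux_tail17 {H : Type*} [NormedAddCommGroup H] [InnerProductSpace ℝ H]
    {n : ℕ} (g : Fin n → H) (μ : Fin n → ℝ)
    (hg : ∀ i j, ⟪g i, g j⟫ = if i = j then μ j else 0)
    (hmono : ∀ j j' : Fin n, j ≤ j' → μ j' ≤ μ j)
    (hpos : ∀ j, 0 ≤ μ j) (r : ℕ) (b : Fin n → ℝ)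
    (hb : ∑ j, b j ^ 2 ≤ 1) :
    ‖∑ j : Fin n, (if r ≤ (j : ℕ) then b j else 0) • g j‖ ^ 2 ≤
      (if h : r < n then μ ⟨r, h⟩ else 0) := by
  rw [aux_norm_sum17 g μ hg]
  set L := (if h : r < n then μ ⟨r, h⟩ else 0) with hL
  have hL0 : 0 ≤ L := by
    rw [hL]; split_ifs with h
    · exact hpos _
    · exact le_refl 0
  calc ∑ j : Fin n, (if r ≤ (j : ℕ) then b j else 0) ^ 2 * μ j
      ≤ ∑ j : Fin n, (if r ≤ (j : ℕ) then b j ^ 2 else 0) * L := by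
        apply Finset.sum_le_sum
        intro j _
        by_cases hj : r ≤ (j : ℕ)
        · have hlt : r < n := lt_of_le_of_lt hj j.isLt
          rw [if_pos hj, if_pos hj, hL, dif_pos hlt]
          exact mul_le_mul_of_nonneg_left (hmono ⟨r, hlt⟩ j hj) (sq_nonneg _)
        · simp [hj]
    _ = (∑ j : Fin n, (if r ≤ (j : ℕ) then b j ^ 2 else 0)) * L := (Finset.sum_mul _ _ _).symm
    _ ≤ 1 * L := by
        apply mul_le_mul_of_nonneg_right _ hL0
        refine le_trans (Finset.sum_le_sum ?_) hb
        intro j _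
        split_ifs
        · exact le_refl _
        · exact sq_nonneg _
    _ = L := one_mul L


/-- Truncation bound: for a nonempty `V ⊆ H` and truncation
levels `r₁ ≤ R₁`, `r₂ ≤ R₂`,
`sup_{‖b‖²+‖b'‖²≤1} d(u(b,b'), V) ≤ 2·sup_{‖b‖²+‖b'‖²≤1, bⱼ=0 for j>r₁, b'ⱼ=0 for j>r₂} d(u(b,b'), V) + 4λ_{r₁+1} + 4τ_{r₂+1}`,
with the conventions `λ_{R₁+1} = 0`, `τ_{R₂+1} = 0`, where
`d(h, V) = inf_{v ∈ V} ‖v − h‖²`. -/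
theorem stmt_17 {H : Type*}
    [NormedAddCommGroup H] [InnerProductSpace ℝ H] [CompleteSpace H]
    {R₁ R₂ : ℕ} (k : Fin R₁ → H) (k' : Fin R₂ → H)
    (hk : LinearIndependent ℝ k) (hk' : LinearIndependent ℝ k')
    (G : Matrix (Fin R₁) (Fin R₁) ℝ) (hG : ∀ i j, G i j = ⟪k i, k j⟫)
    (G' : Matrix (Fin R₂) (Fin R₂) ℝ) (hG' : ∀ i j, G' i j = ⟪k' i, k' j⟫)
    (v : Fin R₁ → Fin R₁ → ℝ)
    (hvON : ∀ j j', v j ⬝ᵥ v j' = if j = j' then 1 else 0)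
    (lam : Fin R₁ → ℝ) (hlam_pos : ∀ j, 0 < lam j)
    (hlam_mono : ∀ j j' : Fin R₁, j ≤ j' → lam j' ≤ lam j)
    (hveig : ∀ j, G *ᵥ v j = lam j • v j)
    (w : Fin R₂ → Fin R₂ → ℝ)
    (hwON : ∀ j j', w j ⬝ᵥ w j' = if j = j' then 1 else 0)
    (tau : Fin R₂ → ℝ) (htau_pos : ∀ j, 0 < tau j)
    (htau_mono : ∀ j j' : Fin R₂, j ≤ j' → tau j' ≤ tau j)
    (hweig : ∀ j, G' *ᵥ w j = tau j • w j)
    (e : Fin R₁ → H) (he : ∀ j, e j = ∑ i, v j i • k i)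
    (f : Fin R₂ → H) (hf : ∀ j, f j = ∑ i, w j i • k' i)
    (u : (Fin R₁ → ℝ) → (Fin R₂ → ℝ) → H)
    (hu : ∀ b b', u b b' = ∑ j, b j • e j + ∑ j, b' j • f j)
    (V : Set H) (hV : V.Nonempty)
    (r₁ r₂ : ℕ) (hr₁ : r₁ ≤ R₁) (hr₂ : r₂ ≤ R₂) :
    (⨆ p : {p : (Fin R₁ → ℝ) × (Fin R₂ → ℝ) //
        p.1 ⬝ᵥ p.1 + p.2 ⬝ᵥ p.2 ≤ 1},
      ⨅ x : V, ‖(x : H) - u p.1.1 p.1.2‖ ^ 2) ≤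
    2 * (⨆ p : {p : (Fin R₁ → ℝ) × (Fin R₂ → ℝ) //
        p.1 ⬝ᵥ p.1 + p.2 ⬝ᵥ p.2 ≤ 1 ∧
        (∀ i : Fin R₁, r₁ ≤ (i : ℕ) → p.1 i = 0) ∧
        (∀ i : Fin R₂, r₂ ≤ (i : ℕ) → p.2 i = 0)},
      ⨅ x : V, ‖(x : H) - u p.1.1 p.1.2‖ ^ 2)
    + 4 * (if h : r₁ < R₁ then lam ⟨r₁, h⟩ else 0)
    + 4 * (if h : r₂ < R₂ then tau ⟨r₂, h⟩ else 0) := by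
  classical
  have hVne : Nonempty V := hV.to_subtype
  obtain ⟨x₀, hx₀⟩ := hV
  have hee := aux_inner17 k G hG v hvON lam hveig e he
  have hff := aux_inner17 k' G' hG' w hwON tau hweig f hf
  set L₁ := (if h : r₁ < R₁ then lam ⟨r₁, h⟩ else 0) with hL₁
  set L₂ := (if h : r₂ < R₂ then tau ⟨r₂, h⟩ else 0) with hL₂
  have hL₁0 : 0 ≤ L₁ := by
    rw [hL₁]; split_ifs with h
    · exact (hlam_pos _).le
    · exact le_refl 0
  have hL₂0 : 0 ≤ L₂ := by
    rw [hL₂]; split_ifs with h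
    · exact (htau_pos _).le
    · exact le_refl 0
  set S := (⨆ p : {p : (Fin R₁ → ℝ) × (Fin R₂ → ℝ) //
        p.1 ⬝ᵥ p.1 + p.2 ⬝ᵥ p.2 ≤ 1 ∧
        (∀ i : Fin R₁, r₁ ≤ (i : ℕ) → p.1 i = 0) ∧
        (∀ i : Fin R₂, r₂ ≤ (i : ℕ) → p.2 i = 0)},
      ⨅ x : V, ‖(x : H) - u p.1.1 p.1.2‖ ^ 2) with hSdef
  have hbdd : ∀ h0 : H, BddBelow (Set.range fun x : V => ‖(x : H) - h0‖ ^ 2) := by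
    intro h0
    refine ⟨0, ?_⟩
    rintro _ ⟨x, rfl⟩
    positivity
  set C : ℝ := (∑ j, ‖e j‖) + ∑ j, ‖f j‖ with hC
  have habs : ∀ {m : ℕ} (b : Fin m → ℝ), b ⬝ᵥ b ≤ 1 → ∀ j, |b j| ≤ 1 := by
    intro m b hb j
    have h1 : b j * b j ≤ b ⬝ᵥ b :=
      Finset.single_le_sum (f := fun i => b i * b i)
        (fun i _ => mul_self_nonneg _) (Finset.mem_univ j)
    exact abs_le_one_iff_mul_self_le_one.2 (le_trans h1 hb)
  have hdot_nonneg : ∀ {m : ℕ} (b : Fin m → ℝ), 0 ≤ b ⬝ᵥ b := by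
    intro m b
    exact Finset.sum_nonneg fun i _ => mul_self_nonneg _
  have hnormu : ∀ b b', b ⬝ᵥ b + b' ⬝ᵥ b' ≤ 1 → ‖u b b'‖ ≤ C := by
    intro b b' h
    have hb : b ⬝ᵥ b ≤ 1 := by linarith [hdot_nonneg b']
    have hb' : b' ⬝ᵥ b' ≤ 1 := by linarith [hdot_nonneg b]
    rw [hu, hC]
    refine le_trans (norm_add_le _ _) (add_le_add ?_ ?_)
    · refine le_trans (norm_sum_le _ _) (Finset.sum_le_sum fun j _ => ?_)
      rw [norm_smul]
      calc ‖b j‖ * ‖e j‖ ≤ 1 * ‖e j‖ :=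
            mul_le_mul_of_nonneg_right (habs b hb j) (norm_nonneg _)
        _ = ‖e j‖ := one_mul _
    · refine le_trans (norm_sum_le _ _) (Finset.sum_le_sum fun j _ => ?_)
      rw [norm_smul]
      calc ‖b' j‖ * ‖f j‖ ≤ 1 * ‖f j‖ :=
            mul_le_mul_of_nonneg_right (habs b' hb' j) (norm_nonneg _)
        _ = ‖f j‖ := one_mul _
  have hSbdd : BddAbove (Set.range fun p : {p : (Fin R₁ → ℝ) × (Fin R₂ → ℝ) //
        p.1 ⬝ᵥ p.1 + p.2 ⬝ᵥ p.2 ≤ 1 ∧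
        (∀ i : Fin R₁, r₁ ≤ (i : ℕ) → p.1 i = 0) ∧
        (∀ i : Fin R₂, r₂ ≤ (i : ℕ) → p.2 i = 0)} =>
      ⨅ x : V, ‖(x : H) - u p.1.1 p.1.2‖ ^ 2) := by
    refine ⟨(‖x₀‖ + C) ^ 2, ?_⟩
    rintro _ ⟨p, rfl⟩
    calc (⨅ x : V, ‖(x : H) - u p.1.1 p.1.2‖ ^ 2)
        ≤ ‖x₀ - u p.1.1 p.1.2‖ ^ 2 := ciInf_le (hbdd _) ⟨x₀, hx₀⟩
      _ ≤ (‖x₀‖ + C) ^ 2 := by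
          refine pow_le_pow_left₀ (norm_nonneg _) ?_ 2
          exact le_trans (norm_sub_le _ _)
            (add_le_add_right (hnormu _ _ p.2.1) _)
  have hne : Nonempty {p : (Fin R₁ → ℝ) × (Fin R₂ → ℝ) //
      p.1 ⬝ᵥ p.1 + p.2 ⬝ᵥ p.2 ≤ 1} :=
    ⟨⟨(0, 0), by simp [dotProduct]⟩⟩
  apply ciSup_le
  rintro ⟨⟨b, b'⟩, hp⟩
  show (⨅ x : V, ‖(x : H) - u b b'‖ ^ 2) ≤ 2 * S + 4 * L₁ + 4 * L₂
  set bt : Fin R₁ → ℝ := fun j => if (j : ℕ) < r₁ then b j else 0 with hbt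
  set bt' : Fin R₂ → ℝ := fun j => if (j : ℕ) < r₂ then b' j else 0 with hbt'
  have hq1 : bt ⬝ᵥ bt + bt' ⬝ᵥ bt' ≤ 1 := by
    refine le_trans (add_le_add ?_ ?_) hp
    · refine Finset.sum_le_sum fun j _ => ?_
      simp only [hbt]
      split_ifs
      · exact le_refl _
      · simpa using mul_self_nonneg (b j)
    · refine Finset.sum_le_sum fun j _ => ?_
      simp only [hbt']
      split_ifs
      · exact le_refl _
      · simpa using mul_self_nonneg (b' j)
  have hq2 : ∀ i : Fin R₁, r₁ ≤ (i : ℕ) → bt i = 0 := fun i hi => if_neg (not_lt.2 hi)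
  have hq2' : ∀ i : Fin R₂, r₂ ≤ (i : ℕ) → bt' i = 0 := fun i hi => if_neg (not_lt.2 hi)
  have hb2 : ∑ j, b j ^ 2 ≤ 1 := by
    have hb1 : b ⬝ᵥ b ≤ 1 := by linarith [hdot_nonneg b']
    simpa [dotProduct, sq] using hb1
  have hb2' : ∑ j, b' j ^ 2 ≤ 1 := by
    have hb1 : b' ⬝ᵥ b' ≤ 1 := by linarith [hdot_nonneg b]
    simpa [dotProduct, sq] using hb1
  have hdiff : u b b' - u bt bt' =
      (∑ j : Fin R₁, (if r₁ ≤ (j : ℕ) then b j else 0) • e j) +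
      (∑ j : Fin R₂, (if r₂ ≤ (j : ℕ) then b' j else 0) • f j) := by
    rw [hu, hu]
    have h0 : (∑ j, b j • e j + ∑ j, b' j • f j) -
        (∑ j, bt j • e j + ∑ j, bt' j • f j) =
        ∑ j, (b j - bt j) • e j + ∑ j, (b' j - bt' j) • f j := by
      simp only [sub_smul, Finset.sum_sub_distrib]
      abel
    rw [h0]
    congr 1
    · refine Finset.sum_congr rfl fun j _ => ?_
      congr 1
      simp only [hbt]
      by_cases h : (j : ℕ) < r₁
      · rw [if_pos h, if_neg (not_le.2 h)]; ring
      · rw [if_neg h, if_pos (not_lt.1 h)]; ring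
    · refine Finset.sum_congr rfl fun j _ => ?_
      congr 1
      simp only [hbt']
      by_cases h : (j : ℕ) < r₂
      · rw [if_pos h, if_neg (not_le.2 h)]; ring
      · rw [if_neg h, if_pos (not_lt.1 h)]; ring
  have hA := aux_tail17 e lam hee hlam_mono (fun j => (hlam_pos j).le) r₁ b hb2
  have hB := aux_tail17 f tau hff htau_mono (fun j => (htau_pos j).le) r₂ b' hb2'
  rw [← hL₁] at hA
  rw [← hL₂] at hB
  set dfull := (⨅ x : V, ‖(x : H) - u b b'‖ ^ 2) with hdfull
  set dtr := (⨅ x : V, ‖(x : H) - u bt bt'‖ ^ 2) with hdtr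
  have hstep : ∀ x : V, dfull ≤ 2 * ‖(x : H) - u bt bt'‖ ^ 2 + (4 * L₁ + 4 * L₂) := by
    intro x
    have h1 : dfull ≤ ‖(x : H) - u b b'‖ ^ 2 := ciInf_le (hbdd _) x
    have h2 : ‖(x : H) - u b b'‖ ^ 2 ≤
        2 * ‖(x : H) - u bt bt'‖ ^ 2 + 2 * ‖u bt bt' - u b b'‖ ^ 2 := by
      have h := aux_sq_add ((x : H) - u bt bt') (u bt bt' - u b b')
      rw [sub_add_sub_cancel] at h
      exact h
    have h3 : ‖u bt bt' - u b b'‖ ^ 2 = ‖u b b' - u bt bt'‖ ^ 2 := by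
      rw [norm_sub_rev]
    have h4 : ‖u b b' - u bt bt'‖ ^ 2 ≤ 2 * L₁ + 2 * L₂ := by
      rw [hdiff]
      refine le_trans (aux_sq_add _ _) ?_
      linarith
    rw [h3] at h2
    linarith
  have hstep2 : (dfull - (4 * L₁ + 4 * L₂)) / 2 ≤ dtr :=
    le_ciInf fun x => by linarith [hstep x]
  have hlast : dtr ≤ S := le_ciSup hSbdd ⟨(bt, bt'), hq1, hq2, hq2'⟩
  linarith
end
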